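/- Correctness of the bypassing operation for Node Unique Label Cover (forward direction): let I be a Node Unique Label Cover instance, v a vertex with φ_v ≠ ∅, and I' the instance obtained by bypassing v (delete v; for each neighbor u restrict φ_u to labels having a ψ_{uv,v}-preimage in φ_v; for each pair of neighbors u₁, u₂ update the edge u₁u₂ by intersecting with ψ_{vu₂,v} ∘ ψ_{vu₁,u₁}). If (X, Ψ) is a solution to I', then there exists α ∈ Σ such that (X, Ψ ∪ {(v, α)}) is a solution to I. -/

import Mathlib

open scoped Classical

/-- A binary relation `ψ` on an alphabet is a *partial permutation* if every element has
at most one image and at most one preimage. -/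
def IsPartialPerm {σ : Type*} (ψ : σ → σ → Prop) : Prop :=
  (∀ a b c : σ, ψ a b → ψ a c → b = c) ∧ (∀ a b c : σ, ψ a c → ψ b c → a = b)

/-- `(X, Ψ)` is a solution to a Node Unique Label Cover instance: `|X| ≤ k`, the labels
of undeleted vertices satisfy the vertex constraints `φ`, and the labels of each
undeleted edge satisfy its edge constraint `ψ`. -/
def ULCSol {V σ : Type*} (G : SimpleGraph V) (k : ℕ) (φ : V → Set σ)
    (ψ : V → V → σ → σ → Prop) (X : Set V) (Ψ : V → σ) : Prop :=
  X.ncard ≤ k ∧ (∀ v ∉ X, Ψ v ∈ φ v) ∧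
  ∀ u ∉ X, ∀ w ∉ X, G.Adj u w → ψ u w (Ψ u) (Ψ w)

/-- The graph obtained from `G` by bypassing the vertex `v`: `v` becomes isolated and
any two distinct neighbors of `v` become adjacent. -/
def bypassGraph {V : Type*} (G : SimpleGraph V) (v : V) : SimpleGraph V where
  Adj u w := u ≠ v ∧ w ≠ v ∧ u ≠ w ∧ (G.Adj u w ∨ (G.Adj u v ∧ G.Adj v w))
  symm := by
    constructor
    rintro u w ⟨h1, h2, h3, h4⟩
    refine ⟨h2, h1, h3.symm, ?_⟩
    rcases h4 with h | ⟨h5, h6⟩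
    · exact Or.inl h.symm
    · exact Or.inr ⟨h6.symm, h5.symm⟩
  loopless := ⟨fun u h => h.2.2.1 rfl⟩

/-- The vertex constraints after bypassing `v`: the bypassed vertex gets no constraint,
each neighbor `u` of `v` keeps only labels having a `ψ u v`-partner in `φ v`, and
other vertices are unchanged. -/
noncomputable def bypassφ {V σ : Type*} (G : SimpleGraph V) (φ : V → Set σ)
    (ψ : V → V → σ → σ → Prop) (v : V) : V → Set σ := fun u =>
  if u = v then Set.univ
  else if G.Adj u v then φ u ∩ {β | ∃ α ∈ φ v, ψ u v β α}
  else φ u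

/-- The edge constraints after bypassing `v`: old constraints are kept, and for each
pair of neighbors of `v` the constraint is additionally intersected with the
composition of the two constraints through `v`. -/
def bypassψ {V σ : Type*} (G : SimpleGraph V) (ψ : V → V → σ → σ → Prop) (v : V) :
    V → V → σ → σ → Prop := fun u w a c =>
  (G.Adj u w → ψ u w a c) ∧
  ((G.Adj u v ∧ G.Adj v w) → ∃ b : σ, ψ u v a b ∧ ψ v w b c)

/-- Correctness of bypassing (forward direction): if `(X, Ψ)` is a solution of the
bypassed instance, then for some label `α` of `v`, `(X, Ψ[v ↦ α])` is a solution of the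
original instance. -/
theorem bypass_forward {V σ : Type*} [Fintype V] [DecidableEq V]
    (G : SimpleGraph V) (k : ℕ) (φ : V → Set σ) (ψ : V → V → σ → σ → Prop)
    (hsymm : ∀ u w a b, ψ u w a b ↔ ψ w u b a)
    (hpp : ∀ u w, G.Adj u w → IsPartialPerm (ψ u w))
    (v : V) (hφv : (φ v).Nonempty)
    (X : Set V) (Ψ : V → σ) (hvX : v ∉ X)
    (hsol : ULCSol (bypassGraph G v) k (bypassφ G φ ψ v) (bypassψ G ψ v) X Ψ) :
    ∃ α : σ, ULCSol G k φ ψ X (Function.update Ψ v α) := by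
  have vertexOK : ∀ (α : σ), α ∈ φ v → ∀ u ∉ X, Function.update Ψ v α u ∈ φ u := by
    intro α hαφ u huX
    by_cases hu : u = v
    · subst hu; simpa using hαφ
    · rw [Function.update_of_ne hu]
      have h := hsol.2.1 u huX
      unfold bypassφ at h
      rw [if_neg hu] at h
      split_ifs at h with hadj
      · exact h.1
      · exact h
  by_cases hnb : ∃ u, u ∉ X ∧ G.Adj u v
  · obtain ⟨u₀, hu₀X, hu₀v⟩ := hnb
    have hmem := hsol.2.1 u₀ hu₀X
    have hu₀ne : u₀ ≠ v := G.ne_of_adj hu₀v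
    unfold bypassφ at hmem
    rw [if_neg hu₀ne, if_pos hu₀v] at hmem
    obtain ⟨hφu₀, α, hαφ, hψ0⟩ := hmem
    have key : ∀ w, w ∉ X → G.Adj v w → ψ v w α (Ψ w) := by
      intro w hwX hvw
      by_cases hw : w = u₀
      · subst hw; exact (hsymm w v _ _).mp hψ0
      · have hwv : w ≠ v := fun h => G.loopless.irrefl v (h ▸ hvw)
        have hbadj : (bypassGraph G v).Adj u₀ w :=
          ⟨hu₀ne, hwv, fun h => hw h.symm, Or.inr ⟨hu₀v, hvw⟩⟩
        obtain ⟨b, hb1, hb2⟩ := (hsol.2.2 u₀ hu₀X w hwX hbadj).2 ⟨hu₀v, hvw⟩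
        have hbα : b = α := (hpp u₀ v hu₀v).1 (Ψ u₀) b α hb1 hψ0
        exact hbα ▸ hb2
    refine ⟨α, hsol.1, vertexOK α hαφ, ?_⟩
    intro u huX w hwX hadj
    by_cases hu : u = v
    · subst hu
      rw [Function.update_self, Function.update_of_ne (G.ne_of_adj hadj).symm]
      exact key w hwX hadj
    · by_cases hw : w = v
      · subst hw
        rw [Function.update_self, Function.update_of_ne hu]
        exact (hsymm w u _ _).mp (key u huX hadj.symm)
      · rw [Function.update_of_ne hu, Function.update_of_ne hw]
        have hbadj : (bypassGraph G v).Adj u w := ⟨hu, hw, G.ne_of_adj hadj, Or.inl hadj⟩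
        exact (hsol.2.2 u huX w hwX hbadj).1 hadj
  · push_neg at hnb
    obtain ⟨α, hαφ⟩ := hφv
    refine ⟨α, hsol.1, vertexOK α hαφ, ?_⟩
    intro u huX w hwX hadj
    by_cases hu : u = v
    · subst hu; exact absurd hadj.symm (hnb w hwX)
    · by_cases hw : w = v
      · subst hw; exact absurd hadj (hnb u huX)
      · rw [Function.update_of_ne hu, Function.update_of_ne hw]
        have hbadj : (bypassGraph G v).Adj u w := ⟨hu, hw, G.ne_of_adj hadj, Or.inl hadj⟩
        exact (hsol.2.2 u huX w hwX hbadj).1 hadj
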